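/- Let q be a power of an odd prime, let Δ be a non-square element of F_q, and let x, y ∈ F_q with x ≠ 0 and y ≠ 0. The centralizer in PGL(2,F_q) of the image of the matrix [[x, Δy],[y, x]] is cyclic of order q+1. -/

import Mathlib

open Matrix
namespace NonsplitCentralizerAux
variable {F : Type*} [Field F]

def Rng (Δ : F) : Subring (Matrix (Fin 2) (Fin 2) F) where
  carrier := {A | A 1 1 = A 0 0 ∧ A 0 1 = Δ * A 1 0}
  zero_mem' := by simp
  one_mem' := by simp [Matrix.one_apply]
  add_mem' := by
    rintro A B ⟨ha1, ha2⟩ ⟨hb1, hb2⟩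
    exact ⟨by simp [ha1, hb1], by simp [ha2, hb2]; ring⟩
  neg_mem' := by
    rintro A ⟨ha1, ha2⟩
    exact ⟨by simp [ha1], by simp [ha2]⟩
  mul_mem' := by
    rintro A B ⟨ha1, ha2⟩ ⟨hb1, hb2⟩
    constructor <;>
      simp [Matrix.mul_apply, Fin.sum_univ_two, ha1, ha2, hb1, hb2] <;> ring

lemma det_ne_zero_of_mem {Δ : F} (hΔ : ¬ IsSquare Δ) {A : Matrix (Fin 2) (Fin 2) F}
    (hA : A ∈ Rng Δ) (h0 : A ≠ 0) : A.det ≠ 0 := by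
  obtain ⟨ha1, ha2⟩ := hA
  rw [Matrix.det_fin_two, ha1, ha2]
  intro h
  rcases eq_or_ne (A 1 0) 0 with hb | hb
  · rw [hb] at h
    have h00 : A 0 0 = 0 := by
      have := mul_self_eq_zero.mp (by linear_combination h : A 0 0 * A 0 0 = 0)
      exact this
    apply h0
    ext i j
    fin_cases i <;> fin_cases j <;> simp [ha1, ha2, hb, h00]
  · apply hΔ
    refine ⟨A 0 0 / A 1 0, ?_⟩
    field_simp
    linear_combination -h


lemma Rng_mul_comm {Δ : F} {A B : Matrix (Fin 2) (Fin 2) F}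
    (hA : A ∈ Rng Δ) (hB : B ∈ Rng Δ) : A * B = B * A := by
  obtain ⟨ha1, ha2⟩ := hA
  obtain ⟨hb1, hb2⟩ := hB
  ext i j
  fin_cases i <;> fin_cases j <;>
    simp [Matrix.mul_apply, Fin.sum_univ_two, ha1, ha2, hb1, hb2] <;> ring

instance (Δ : F) : CommRing (Rng Δ) :=
  { (inferInstance : Ring (Rng Δ)) with
    mul_comm := fun a b => Subtype.ext (Rng_mul_comm a.2 b.2) }

instance (Δ : F) : Nontrivial (Rng Δ) := by
  refine ⟨0, 1, fun h => ?_⟩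
  exact zero_ne_one (α := Matrix (Fin 2) (Fin 2) F) (congrArg Subtype.val h)

lemma isDomain_Rng {Δ : F} (hΔ : ¬ IsSquare Δ) : IsDomain (Rng Δ) := by
  have : NoZeroDivisors (Rng Δ) := by
    constructor
    intro a b hab
    by_contra hcon
    push_neg at hcon
    obtain ⟨ha, hb⟩ := hcon
    have hda : (a : Matrix (Fin 2) (Fin 2) F).det ≠ 0 :=
      det_ne_zero_of_mem hΔ a.2 (fun h => ha (Subtype.ext h))
    have hdb : (b : Matrix (Fin 2) (Fin 2) F).det ≠ 0 :=
      det_ne_zero_of_mem hΔ b.2 (fun h => hb (Subtype.ext h))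
    have : ((a * b : Rng Δ) : Matrix (Fin 2) (Fin 2) F).det = 0 := by
      rw [hab]; simp
    rw [Subring.coe_mul, Matrix.det_mul] at this
    exact mul_ne_zero hda hdb this
  exact NoZeroDivisors.to_isDomain _

/-- `Rng Δ` is in bijection with `F × F`. -/
def rngEquivProd (Δ : F) : Rng Δ ≃ F × F where
  toFun A := ((A : Matrix (Fin 2) (Fin 2) F) 0 0, (A : Matrix (Fin 2) (Fin 2) F) 1 0)
  invFun p := ⟨!![p.1, Δ * p.2; p.2, p.1], by constructor <;> simp⟩
  left_inv A := by
    obtain ⟨A, hA1, hA2⟩ := A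
    refine Subtype.ext ?_
    ext i j
    fin_cases i <;> fin_cases j <;> simp [hA1, hA2]
  right_inv p := by simp

lemma card_Rng (Δ : F) [Fintype F] : Nat.card (Rng Δ) = Fintype.card F ^ 2 := by
  rw [Nat.card_congr (rngEquivProd Δ), Nat.card_prod, Nat.card_eq_fintype_card, sq]

lemma card_Rng_units {Δ : F} [Fintype F] (hΔ : ¬ IsSquare Δ) :
    Nat.card (Rng Δ)ˣ = Fintype.card F ^ 2 - 1 := by
  haveI := isDomain_Rng hΔ
  haveI : Finite (Rng Δ) := by
    have := Fintype.finite (inferInstance : Fintype (Matrix (Fin 2) (Fin 2) F))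
    exact Subtype.finite
  cases nonempty_fintype (Rng Δ)
  letI := Classical.decEq (Rng Δ)
  letI : Field (Rng Δ) := Fintype.fieldOfDomain _
  rw [Nat.card_units, card_Rng]


/-- Elements of the center of `GL(2,F)` are scalar matrices. -/
lemma mem_center_GL_iff {z : GL (Fin 2) F} :
    z ∈ Subgroup.center (GL (Fin 2) F) ↔
      ∃ c : F, (z : Matrix (Fin 2) (Fin 2) F) = c • 1 := by
  constructor
  · intro hz
    rw [Subgroup.mem_center_iff] at hz
    have e1 : !![(1:F),1;0,1] * !![(1:F),-1;0,1] = 1 := by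
      ext i j
      fin_cases i <;> fin_cases j <;>
        simp [Matrix.mul_apply, Fin.sum_univ_two, Matrix.one_apply]
    have e1' : !![(1:F),-1;0,1] * !![(1:F),1;0,1] = 1 := by
      ext i j
      fin_cases i <;> fin_cases j <;>
        simp [Matrix.mul_apply, Fin.sum_univ_two, Matrix.one_apply]
    have e2 : !![(1:F),0;1,1] * !![(1:F),0;-1,1] = 1 := by
      ext i j
      fin_cases i <;> fin_cases j <;>
        simp [Matrix.mul_apply, Fin.sum_univ_two, Matrix.one_apply]
    have e2' : !![(1:F),0;-1,1] * !![(1:F),0;1,1] = 1 := by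
      ext i j
      fin_cases i <;> fin_cases j <;>
        simp [Matrix.mul_apply, Fin.sum_univ_two, Matrix.one_apply]
    have h1 := congrArg Units.val (hz ⟨!![1,1;0,1], !![1,-1;0,1], e1, e1'⟩)
    have h2 := congrArg Units.val (hz ⟨!![1,0;1,1], !![1,0;-1,1], e2, e2'⟩)
    simp only [Units.val_mul] at h1 h2
    set m : Matrix (Fin 2) (Fin 2) F := (z : Matrix (Fin 2) (Fin 2) F) with hm
    have h1a := congrFun (congrFun h1 0) 0
    have h1b := congrFun (congrFun h1 0) 1
    have h2a := congrFun (congrFun h2 0) 0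
    simp only [Matrix.mul_apply, Fin.sum_univ_two] at h1a h1b h2a
    norm_num at h1a h1b h2a
    refine ⟨m 0 0, ?_⟩
    ext i j
    fin_cases i <;> fin_cases j <;>
      simp [Matrix.smul_apply, Matrix.one_apply] <;> first | exact h2a | exact h1a | linear_combination h1b
  · rintro ⟨c, hc⟩
    rw [Subgroup.mem_center_iff]
    intro b
    refine Units.ext ?_
    simp only [Units.val_mul, hc, smul_mul_assoc, mul_smul_comm, mul_one, one_mul]


/-- A matrix commuting with `!![x, Δ*y; y, x]` (with `y ≠ 0`, `Δ ≠ 0`) lies in `Rng Δ`. -/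
lemma mem_Rng_of_commute {Δ x y : F} (hy : y ≠ 0) (hΔ0 : Δ ≠ 0)
    {m : Matrix (Fin 2) (Fin 2) F}
    (hc : m * !![x, Δ * y; y, x] = !![x, Δ * y; y, x] * m) : m ∈ Rng Δ := by
  have h00 := congrFun (congrFun hc 0) 0
  have h01 := congrFun (congrFun hc 0) 1
  simp only [Matrix.mul_apply, Fin.sum_univ_two] at h00 h01
  norm_num at h00 h01
  constructor
  · -- m 1 1 = m 0 0
    have : Δ * y * m 1 1 = Δ * y * m 0 0 := by linear_combination -h01
    exact mul_left_cancel₀ (mul_ne_zero hΔ0 hy) this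
  · -- m 0 1 = Δ * m 1 0
    have : y * m 0 1 = y * (Δ * m 1 0) := by linear_combination h00
    exact mul_left_cancel₀ hy this

end NonsplitCentralizerAux



open NonsplitCentralizerAux

/-- Let Δ be a non-square in F_q (q a power of an odd prime) and x, y ∈ F_q with
x ≠ 0 and y ≠ 0. The centralizer in PGL(2, F_q) of the image of the matrix
[[x, Δy],[y, x]] is cyclic of order q + 1. -/
theorem centralizer_image_nonsplit_iso_cyclic {F : Type*} [Field F] [Fintype F]
    (hq : Odd (Fintype.card F)) (Δ : F) (hΔ : ¬ IsSquare Δ) (x y : F)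
    (hx : x ≠ 0) (hy : y ≠ 0)
    (g : Matrix.GeneralLinearGroup (Fin 2) F)
    (hg : (g : Matrix (Fin 2) (Fin 2) F) = !![x, Δ * y; y, x]) :
    IsCyclic
      (Subgroup.centralizer
        {(QuotientGroup.mk g :
          Matrix.GeneralLinearGroup (Fin 2) F ⧸
            Subgroup.center (Matrix.GeneralLinearGroup (Fin 2) F))}) ∧
    Nat.card
        (Subgroup.centralizer
          {(QuotientGroup.mk g :
            Matrix.GeneralLinearGroup (Fin 2) F ⧸
              Subgroup.center (Matrix.GeneralLinearGroup (Fin 2) F))}) =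
      Fintype.card F + 1 := by
  classical
  have h2 : (2 : F) ≠ 0 := by
    intro h2
    have hchar : ringChar F ∣ 2 :=
      (CharP.cast_eq_zero_iff F (ringChar F) 2).mp (by exact_mod_cast h2)
    rcases (Nat.dvd_prime Nat.prime_two).mp hchar with h | h
    · exact CharP.ringChar_ne_one h
    · have := FiniteField.even_card_iff_char_two.mp h
      rw [Nat.odd_iff] at hq
      omega
  have hΔ0 : Δ ≠ 0 := fun h => hΔ (h ▸ (⟨0, by simp⟩ : IsSquare (0 : F)))
  have hgmem : (g : Matrix (Fin 2) (Fin 2) F) ∈ Rng Δ := by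
    rw [hg]; exact ⟨by simp, by simp⟩
  haveI := isDomain_Rng hΔ
  haveI : Finite (Rng Δ) := by
    have := Fintype.finite (inferInstance : Fintype (Matrix (Fin 2) (Fin 2) F))
    exact Subtype.finite
  set Z := Subgroup.center (Matrix.GeneralLinearGroup (Fin 2) F) with hZ
  let ψ : (Rng Δ)ˣ →* Matrix.GeneralLinearGroup (Fin 2) F :=
    Units.map (Rng Δ).subtype.toMonoidHom
  let η := (QuotientGroup.mk' Z).comp ψ
  -- the range of η is the centralizer
  have hrange : η.range = Subgroup.centralizer
      {(QuotientGroup.mk g : Matrix.GeneralLinearGroup (Fin 2) F ⧸ Z)} := by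
    ext p
    constructor
    · rintro ⟨u, rfl⟩
      rw [Subgroup.mem_centralizer_singleton_iff]
      show QuotientGroup.mk (ψ u) * QuotientGroup.mk g
          = QuotientGroup.mk g * QuotientGroup.mk (ψ u)
      rw [← QuotientGroup.mk_mul, ← QuotientGroup.mk_mul]
      congr 1
      refine Units.ext ?_
      exact Rng_mul_comm u.1.2 hgmem
    · intro hp
      obtain ⟨h, rfl⟩ := QuotientGroup.mk_surjective p
      rw [Subgroup.mem_centralizer_singleton_iff] at hp
      rw [← QuotientGroup.mk_mul, ← QuotientGroup.mk_mul] at hp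
      rw [QuotientGroup.eq] at hp
      obtain ⟨c, hc⟩ := mem_center_GL_iff.mp hp
      -- hc : ((h*g)⁻¹ * (g*h) : GL).val = c • 1
      have hmul : (g : Matrix (Fin 2) (Fin 2) F) * (h : Matrix (Fin 2) (Fin 2) F)
          = c • ((h : Matrix (Fin 2) (Fin 2) F) * (g : Matrix (Fin 2) (Fin 2) F)) := by
        have h1 : ((h * g : Matrix.GeneralLinearGroup (Fin 2) F) : Matrix (Fin 2) (Fin 2) F)
            * (((h * g)⁻¹ * (g * h) : Matrix.GeneralLinearGroup (Fin 2) F) :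
                Matrix (Fin 2) (Fin 2) F)
            = ((g * h : Matrix.GeneralLinearGroup (Fin 2) F) : Matrix (Fin 2) (Fin 2) F) := by
          rw [← Units.val_mul, ← mul_assoc, mul_inv_cancel, one_mul]
        rw [hc] at h1
        rw [Units.val_mul, Units.val_mul] at h1
        rw [← h1, mul_smul_comm, mul_one]
      have hc1 : c = 1 := by
        have hinv : (h : Matrix (Fin 2) (Fin 2) F) *
            ((h⁻¹ : Matrix.GeneralLinearGroup (Fin 2) F) : Matrix (Fin 2) (Fin 2) F) = 1 := by
          rw [← Units.val_mul, mul_inv_cancel, Units.val_one]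
        have e1 := congrArg (fun M => M * ((h⁻¹ : Matrix.GeneralLinearGroup (Fin 2) F) :
            Matrix (Fin 2) (Fin 2) F)) hmul
        rw [mul_assoc, hinv, mul_one, smul_mul_assoc] at e1
        -- e1 : g.val = c • (h.val * g.val * h⁻¹.val)
        have tr := congrArg Matrix.trace e1
        rw [Matrix.trace_smul] at tr
        have tc : Matrix.trace ((h : Matrix (Fin 2) (Fin 2) F) *
            (g : Matrix (Fin 2) (Fin 2) F) *
            ((h⁻¹ : Matrix.GeneralLinearGroup (Fin 2) F) : Matrix (Fin 2) (Fin 2) F))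
            = Matrix.trace (g : Matrix (Fin 2) (Fin 2) F) := by
          rw [Matrix.trace_mul_comm, ← mul_assoc]
          rw [← Units.val_mul, inv_mul_cancel, Units.val_one, one_mul]
        rw [tc] at tr
        have htg : Matrix.trace (g : Matrix (Fin 2) (Fin 2) F) = 2 * x := by
          rw [hg, Matrix.trace_fin_two]
          simp [two_mul]
        rw [htg] at tr
        have h2x : (2 : F) * x ≠ 0 := mul_ne_zero h2 hx
        have : (1 : F) * (2 * x) = c * (2 * x) := by rw [one_mul]; exact tr
        exact (mul_right_cancel₀ h2x this).symm
      have hcomm : g * h = h * g := by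
        have : ((h * g)⁻¹ * (g * h) : Matrix.GeneralLinearGroup (Fin 2) F) = 1 := by
          refine Units.ext ?_
          rw [hc, hc1, one_smul, Units.val_one]
        have := congrArg (fun w => (h * g) * w) this
        simpa [mul_assoc] using this
      have hmemh : (h : Matrix (Fin 2) (Fin 2) F) ∈ Rng Δ := by
        refine mem_Rng_of_commute (x := x) hy hΔ0 ?_
        have := congrArg Units.val hcomm
        rw [Units.val_mul, Units.val_mul, hg] at this
        exact this.symm
      have hmemhinv : ((h⁻¹ : Matrix.GeneralLinearGroup (Fin 2) F) :
          Matrix (Fin 2) (Fin 2) F) ∈ Rng Δ := by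
        refine mem_Rng_of_commute (x := x) hy hΔ0 ?_
        have hcomm' : g * h⁻¹ = h⁻¹ * g := (Commute.inv_right hcomm)
        have := congrArg Units.val hcomm'
        rw [Units.val_mul, Units.val_mul, hg] at this
        exact this.symm
      refine ⟨⟨⟨(h : Matrix (Fin 2) (Fin 2) F), hmemh⟩,
        ⟨((h⁻¹ : Matrix.GeneralLinearGroup (Fin 2) F) : Matrix (Fin 2) (Fin 2) F), hmemhinv⟩,
        ?_, ?_⟩, ?_⟩
      · refine Subtype.ext ?_
        show (h : Matrix (Fin 2) (Fin 2) F) *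
          ((h⁻¹ : Matrix.GeneralLinearGroup (Fin 2) F) : Matrix (Fin 2) (Fin 2) F) = _
        rw [← Units.val_mul, mul_inv_cancel, Units.val_one]
        rfl
      · refine Subtype.ext ?_
        show ((h⁻¹ : Matrix.GeneralLinearGroup (Fin 2) F) : Matrix (Fin 2) (Fin 2) F) *
          (h : Matrix (Fin 2) (Fin 2) F) = _
        rw [← Units.val_mul, inv_mul_cancel, Units.val_one]
        rfl
      · exact congrArg QuotientGroup.mk (Units.ext rfl)
  -- the scalar embedding
  have smem : ∀ a : F, algebraMap F (Matrix (Fin 2) (Fin 2) F) a ∈ Rng Δ := by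
    intro a
    rw [Algebra.algebraMap_eq_smul_one]
    exact ⟨by simp [Matrix.smul_apply, Matrix.one_apply],
      by simp [Matrix.smul_apply, Matrix.one_apply]⟩
  let sHom : F →+* Rng Δ := (algebraMap F (Matrix (Fin 2) (Fin 2) F)).codRestrict (Rng Δ) smem
  let χ : Fˣ →* (Rng Δ)ˣ := Units.map sHom.toMonoidHom
  have hker : η.ker = χ.range := by
    ext u
    rw [MonoidHom.mem_ker]
    show QuotientGroup.mk' Z (ψ u) = 1 ↔ _
    rw [← MonoidHom.mem_ker, QuotientGroup.ker_mk']
    rw [hZ, mem_center_GL_iff]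
    constructor
    · rintro ⟨c, hc⟩
      have hc0 : c ≠ 0 := by
        rintro rfl
        have hu0 : (u : Rng Δ) = 0 := Subtype.ext (by rw [show ((u : Rng Δ) :
          Matrix (Fin 2) (Fin 2) F) = (ψ u : Matrix (Fin 2) (Fin 2) F) from rfl, hc, zero_smul]; rfl)
        exact Units.ne_zero u hu0
      refine ⟨Units.mk0 c hc0, Units.ext (Subtype.ext ?_)⟩
      show algebraMap F (Matrix (Fin 2) (Fin 2) F) c = _
      rw [Algebra.algebraMap_eq_smul_one, ← hc]
      rfl
    · rintro ⟨a, rfl⟩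
      refine ⟨(a : F), ?_⟩
      show algebraMap F (Matrix (Fin 2) (Fin 2) F) (a : F) = _
      rw [Algebra.algebraMap_eq_smul_one]
  -- cardinalities
  have hχinj : Function.Injective χ :=
    Units.map_injective (f := sHom.toMonoidHom) (fun a b hab => by
      have : algebraMap F (Matrix (Fin 2) (Fin 2) F) a
          = algebraMap F (Matrix (Fin 2) (Fin 2) F) b := congrArg Subtype.val hab
      exact (algebraMap F (Matrix (Fin 2) (Fin 2) F)).injective this)
  have hcardker : Nat.card η.ker = Fintype.card F - 1 := by
    rw [hker, Nat.card_congr (MonoidHom.ofInjective hχinj).toEquiv.symm,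
      Nat.card_units, Nat.card_eq_fintype_card]
  have hcardquot : Nat.card ((Rng Δ)ˣ ⧸ η.ker) = Nat.card η.range :=
    Nat.card_congr (QuotientGroup.quotientKerEquivRange η).toEquiv
  have key := Subgroup.card_eq_card_quotient_mul_card_subgroup η.ker
  rw [hcardquot, hcardker, card_Rng_units hΔ] at key
  have hq2 : 2 ≤ Fintype.card F := Fintype.one_lt_card
  have hcardS : Nat.card η.range = Fintype.card F + 1 := by
    obtain ⟨k, hk⟩ : ∃ k, Fintype.card F = k + 2 := ⟨Fintype.card F - 2, by omega⟩
    rw [hk] at key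
    have expand : (k + 2) ^ 2 - 1 = (k + 3) * (k + 1) := by
      have h' : (k + 2) ^ 2 = (k + 3) * (k + 1) + 1 := by ring
      exact Nat.sub_eq_of_eq_add h'
    rw [expand, (by omega : k + 2 - 1 = k + 1)] at key
    have := Nat.eq_of_mul_eq_mul_right (by omega : 0 < k + 1) key
    omega
  constructor
  · rw [← hrange]
    haveI : Finite (Rng Δ)ˣ := inferInstance
    exact isCyclic_of_surjective _ η.rangeRestrict_surjective
  · rw [← hrange]
    exact hcardS
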